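/- Let X be a connected Alexandroff space, A a nonempty subspace, T a maximal tree of X meeting each connected component of A in a maximal tree of that component, x₀ ∈ X, and α : π₁(X,x₀) → G a group homomorphism. For a ∈ A let θ_a : π₁(X,a) → π₁(X,x₀) be the isomorphism induced by the unique arrow of LT from a to x₀. Then the functor F_{T,α} : X → G is trivial on A (sends all relations within A to the identity of G) if and only if the image of π₁(A,a) → π₁(X,a) is contained in ker(α∘θ_a) for every a ∈ A. -/

import Mathlib

open CategoryTheory

universe v u

/-- A subcategory of a category `C`, given by a set of objects and sets of morphisms closed
under identities and composition. -/
structure Subcat (C : Type u) [Category.{v} C] : Type (max u v) where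
  objs : Set C
  homs : ∀ x y : C, Set (x ⟶ y)
  src_mem : ∀ {x y : C} {f : x ⟶ y}, f ∈ homs x y → x ∈ objs
  tgt_mem : ∀ {x y : C} {f : x ⟶ y}, f ∈ homs x y → y ∈ objs
  id_mem : ∀ x ∈ objs, 𝟙 x ∈ homs x x
  comp_mem : ∀ {x y z : C} {f : x ⟶ y} {g : y ⟶ z},
    f ∈ homs x y → g ∈ homs y z → f ≫ g ∈ homs x z

namespace Subcat
variable {C : Type u} [Category.{v} C] (S : Subcat C)

/-- The underlying category of a subcategory. -/
def carrier : Type u := {x : C // x ∈ S.objs}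

instance : Category.{v} S.carrier where
  Hom a b := {f : a.1 ⟶ b.1 // f ∈ S.homs a.1 b.1}
  id a := ⟨𝟙 a.1, S.id_mem a.1 a.2⟩
  comp f g := ⟨f.1 ≫ g.1, S.comp_mem f.2 g.2⟩
  id_comp f := Subtype.ext (Category.id_comp f.1)
  comp_id f := Subtype.ext (Category.comp_id f.1)
  assoc f g h := Subtype.ext (Category.assoc f.1 g.1 h.1)

/-- The inclusion functor of a subcategory. -/
def incl : S.carrier ⥤ C where
  obj x := x.1
  map f := f.1
  map_id _ := rfl
  map_comp _ _ := rfl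

end Subcat

/-- A category is indiscrete if there is exactly one morphism between any two objects. -/
def IsIndiscrete (D : Type*) [Category D] : Prop := ∀ x y : D, ∃! _f : x ⟶ y, True

/-- A small category is a tree if its localization (at all of its morphisms) is indiscrete. -/
def IsTree (T : Type*) [Category T] : Prop :=
  IsIndiscrete ((⊤ : MorphismProperty T).Localization)

/-- The localization of a category at all of its morphisms. -/
abbrev LocCat (C : Type u) [Category.{v} C] := ((⊤ : MorphismProperty C)).Localization

/-- The canonical functor to the localization. -/
abbrev locQ (C : Type u) [Category.{v} C] : C ⥤ LocCat C := ((⊤ : MorphismProperty C)).Q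

/-- The functor `LD → LC` induced on localizations by a functor `D ⥤ C`. -/
noncomputable def locMap {D : Type u} [Category.{v} D] {C : Type u} [Category.{v} C]
    (F : D ⥤ C) : LocCat D ⥤ LocCat C :=
  CategoryTheory.Localization.Construction.lift (F ⋙ locQ C)
    (fun _ _ f _ => (⊤ : MorphismProperty C).Q_inverts (F.map f) (by trivial))

theorem locMap_obj {D : Type u} [Category.{v} D] {C : Type u} [Category.{v} C]
    (F : D ⥤ C) (x : D) :
    (locMap F).obj ((locQ D).obj x) = (locQ C).obj (F.obj x) :=
  CategoryTheory.Functor.congr_obj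
    (CategoryTheory.Localization.Construction.fac (F ⋙ locQ C)
      (fun _ _ f _ => (⊤ : MorphismProperty C).Q_inverts (F.map f) (by trivial))) x

/-- The inclusion of a subspace of an Alexandroff space (i.e. of a subset of a preordered
set), as a functor between the associated thin categories. -/
def inclFunctor {X : Type u} [Preorder X] (A : Set X) : ↥A ⥤ X :=
  Monotone.functor (f := (Subtype.val : ↥A → X)) (fun _ _ h => h)


theorem locMap_fac {D : Type u} [Category.{v} D] {C : Type u} [Category.{v} C] (F : D ⥤ C) :
    locQ D ⋙ locMap F = F ⋙ locQ C :=
  CategoryTheory.Localization.Construction.fac _ _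

theorem locMap_comp {D C E : Type u} [Category.{v} D] [Category.{v} C] [Category.{v} E]
    (F : D ⥤ C) (G : C ⥤ E) : locMap F ⋙ locMap G = locMap (F ⋙ G) := by
  apply CategoryTheory.Localization.Construction.uniq
  rw [← Functor.assoc, locMap_fac, Functor.assoc, locMap_fac, locMap_fac, Functor.assoc]

universe w

/-- The group `G` viewed as a single-object groupoid, with `comp = (*)`. -/
def BG (G : Type w) [Group G] : Type w := PUnit

/-- The unique object of `BG G`. -/
def BG.pt (G : Type w) [Group G] : BG G := PUnit.unit

instance (G : Type w) [Group G] : Groupoid (BG G) where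
  Hom _ _ := G
  id _ := (1 : G)
  comp f g := f * g
  id_comp := one_mul
  comp_id := mul_one
  assoc := mul_assoc
  inv f := f⁻¹
  inv_comp := inv_mul_cancel
  comp_inv := mul_inv_cancel

/-- The functor `LX ⥤ BG` given by `g ↦ α (τ ≫ g ≫ τ)`. -/
noncomputable def Mfun {X : Type u} [Preorder X] {G : Type w} [Group G] (x₀ : X)
    (α : ((locQ X).obj x₀ ⟶ (locQ X).obj x₀) → G)
    (hα_one : α (𝟙 _) = 1)
    (hα_mul : ∀ g h : ((locQ X).obj x₀ ⟶ (locQ X).obj x₀), α (g ≫ h) = α g * α h)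
    (τ : ∀ a b : X, ((locQ X).obj a ⟶ (locQ X).obj b))
    (τcomp : ∀ a b c, τ a b ≫ τ b c = τ a c) (τrefl : ∀ a, τ a a = 𝟙 _) :
    LocCat X ⥤ BG G where
  obj _ := PUnit.unit
  map {P Q} g := α (τ x₀ P.as.obj ≫ g ≫ τ Q.as.obj x₀)
  map_id P := by
    have key : ∀ p : X, α (τ x₀ p ≫ 𝟙 ((locQ X).obj p) ≫ τ p x₀) = 1 := by
      intro p
      rw [Category.id_comp, τcomp, τrefl]
      exact hα_one
    exact key P.as.obj
  map_comp {P Q R} g h := by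
    have key : ∀ (p q r : X) (g : (locQ X).obj p ⟶ (locQ X).obj q)
        (h : (locQ X).obj q ⟶ (locQ X).obj r),
        α (τ x₀ p ≫ (g ≫ h) ≫ τ r x₀)
          = α (τ x₀ p ≫ g ≫ τ q x₀) * α (τ x₀ q ≫ h ≫ τ r x₀) := by
      intro p q r g h
      rw [← hα_mul]
      congr 1
      have τcomp' : ∀ (a b c : X) {Z : LocCat X} (k : (locQ X).obj c ⟶ Z),
          τ a b ≫ τ b c ≫ k = τ a c ≫ k := by
        intro a b c Z k; rw [← Category.assoc, τcomp]
      simp only [Category.assoc]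
      rw [τcomp' q x₀ q, τrefl, Category.id_comp]
    exact key P.as.obj Q.as.obj R.as.obj g h

theorem Mfun_map {X : Type u} [Preorder X] {G : Type w} [Group G] (x₀ : X)
    (α : ((locQ X).obj x₀ ⟶ (locQ X).obj x₀) → G)
    (hα_one : α (𝟙 _) = 1)
    (hα_mul : ∀ g h : ((locQ X).obj x₀ ⟶ (locQ X).obj x₀), α (g ≫ h) = α g * α h)
    (τ : ∀ a b : X, ((locQ X).obj a ⟶ (locQ X).obj b))
    (τcomp : ∀ a b c, τ a b ≫ τ b c = τ a c) (τrefl : ∀ a, τ a a = 𝟙 _)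
    {P Q : LocCat X} (g : P ⟶ Q) {p q : X}
    (hP : P = (locQ X).obj p) (hQ : Q = (locQ X).obj q) :
    (Mfun x₀ α hα_one hα_mul τ τcomp τrefl).map g
      = α (τ x₀ p ≫ (eqToHom hP.symm ≫ g ≫ eqToHom hQ) ≫ τ q x₀) := by
  subst hP hQ
  simp only [eqToHom_refl, Category.comp_id, Category.id_comp]
  rfl

/-- The functor from the carrier of a subcategory `S` into `↥A`, given
objectwise membership. -/
def Jfun {X : Type u} [Preorder X] (A : Set X) (S : Subcat X)
    (h : ∀ x, x ∈ S.objs → x ∈ A) : S.carrier ⥤ ↥A where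
  obj x := ⟨x.1, h x.1 x.2⟩
  map f := homOfLE (leOfHom f.1)
  map_id _ := rfl
  map_comp _ _ := rfl

/-- The functor from the carrier of a subcategory `S` into the carrier of `T`. -/
def Kfun {X : Type u} [Preorder X] (T S : Subcat X)
    (hobj : ∀ x, x ∈ S.objs → x ∈ T.objs)
    (hhom : ∀ {x y : X} (f : x ⟶ y), f ∈ S.homs x y → f ∈ T.homs x y) :
    S.carrier ⥤ T.carrier where
  obj x := ⟨x.1, hobj x.1 x.2⟩
  map f := ⟨f.1, hhom f.1 f.2⟩
  map_id _ := Subtype.ext rfl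
  map_comp _ _ := Subtype.ext rfl

theorem eqToHom_aux_comp {C : Type u} [Category.{v} C] {w x y z v' v : C} (p1 : w = x)
    (f : x ⟶ y) (q1 : y = z) (p2 : z = y) (g : y ⟶ v') (q2 : v' = v) :
    (eqToHom p1 ≫ f ≫ eqToHom q1) ≫ eqToHom p2 ≫ g ≫ eqToHom q2
      = eqToHom p1 ≫ f ≫ g ≫ eqToHom q2 := by
  subst q1; simp

theorem eqToHom_aux_id {C D : Type u} [Category.{v} C] [Category.{v} D] (F : C ⥤ D) {x : C}
    {y : D} (p : y = F.obj x) (q : F.obj x = y) :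
    eqToHom p ≫ F.map (𝟙 x) ≫ eqToHom q = 𝟙 y := by
  subst p; simp

theorem eqToHom_aux_key {C : Type u} [Category.{v} C] {w x y z m n o e : C} (φ : w ⟶ x)
    (p : x = y) (q : y = z) (r : z = m) (k : m ⟶ n) (s : n = o) (t : o = e) (u : x = m)
    (v : n = e) :
    φ ≫ eqToHom p ≫ (eqToHom q ≫ eqToHom r ≫ k ≫ eqToHom s) ≫ eqToHom t
      = φ ≫ eqToHom u ≫ k ≫ eqToHom v := by
  subst p q r s t; simp

/-- Let `X` be a connected Alexandroff space (viewed as a preorder/thin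
category), `A` a nonempty subspace, `T` a maximal tree of `X` meeting each connected
component of `A` in a tree, `x₀ ∈ X` and `α : π₁(X,x₀) → G` a group homomorphism (with
`π₁(X,x₀) = Aut_{LX}(x₀)`).  For `a ∈ A` let `θ_a : π₁(X,a) → π₁(X,x₀)` be the isomorphism
induced by the unique arrow of `LT` from `a` to `x₀` (conjugation by the tree arrows `τ`).
Then `F_{T,α}` is trivial on `A` iff the image of `π₁(A,a) → π₁(X,a)` is contained in
`ker (α ∘ θ_a)` for every `a ∈ A`. -/
theorem stmt_17 {X : Type u} [Preorder X] [IsConnected X]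
    (A : Set X) (hA : A.Nonempty)
    (T : Subcat X) (hwide : T.objs = Set.univ) (htree : IsTree T.carrier)
    -- the intersection of `T` with each connected component of `A` is a tree
    (hmeet : ∀ (a : ↥A) (S : Subcat X),
      S.objs = {x : X | ∃ hx : x ∈ A, CategoryTheory.Zigzag (⟨x, hx⟩ : ↥A) a} →
      (∀ (x y : X) (f : x ⟶ y),
        f ∈ S.homs x y ↔ f ∈ T.homs x y ∧ x ∈ S.objs ∧ y ∈ S.objs) →
      IsTree S.carrier)
    (x₀ : X) (G : Type*) [Group G]
    (α : ((locQ X).obj x₀ ⟶ (locQ X).obj x₀) → G)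
    (hα_one : α (𝟙 _) = 1)
    (hα_mul : ∀ g h : ((locQ X).obj x₀ ⟶ (locQ X).obj x₀), α (g ≫ h) = α g * α h)
    -- the system of tree arrows of `T` in the localization `LX`
    (τ : ∀ a b : X, ((locQ X).obj a ⟶ (locQ X).obj b))
    (hτ : ∀ (a b : X) (ha : a ∈ T.objs) (hb : b ∈ T.objs)
      (t : (locQ T.carrier).obj ⟨a, ha⟩ ⟶ (locQ T.carrier).obj ⟨b, hb⟩),
      τ a b = eqToHom (locMap_obj T.incl ⟨a, ha⟩).symm ≫ (locMap T.incl).map t ≫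
        eqToHom (locMap_obj T.incl ⟨b, hb⟩)) :
    -- `F_{T,α}` is trivial on `A` iff `i₊(π₁(A,a)) ⊆ ker (α ∘ θ_a)` for every `a ∈ A`
    (∀ (a a' : X), a ∈ A → a' ∈ A → ∀ f : a ⟶ a',
        α (τ x₀ a ≫ (locQ X).map f ≫ τ a' x₀) = 1) ↔
      ∀ (a : ↥A) (γ : (locQ ↥A).obj a ⟶ (locQ ↥A).obj a),
        α (τ x₀ a.1 ≫
            (eqToHom (locMap_obj (inclFunctor A) a).symm ≫ (locMap (inclFunctor A)).map γ ≫
              eqToHom (locMap_obj (inclFunctor A) a)) ≫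
            τ a.1 x₀) = 1 := by
  classical
  have haT : ∀ x : X, x ∈ T.objs := fun x => by rw [hwide]; trivial
  have τcomp : ∀ a b c : X, τ a b ≫ τ b c = τ a c := by
    intro a b c
    obtain ⟨t₁, -⟩ := htree ((locQ T.carrier).obj ⟨a, haT a⟩) ((locQ T.carrier).obj ⟨b, haT b⟩)
    obtain ⟨t₂, -⟩ := htree ((locQ T.carrier).obj ⟨b, haT b⟩) ((locQ T.carrier).obj ⟨c, haT c⟩)
    rw [hτ a b (haT a) (haT b) t₁, hτ b c (haT b) (haT c) t₂,
      hτ a c (haT a) (haT c) (t₁ ≫ t₂)]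
    simp
    exact eqToHom_aux_comp _ _ _ _ _ _
  have τrefl : ∀ a : X, τ a a = 𝟙 _ := by
    intro a
    rw [hτ a a (haT a) (haT a) (𝟙 _)]
    exact eqToHom_aux_id _ _ _
  constructor
  · -- forward direction
    intro hL a γ
    have hfun : locQ ↥A ⋙ (locMap (inclFunctor A) ⋙ Mfun x₀ α hα_one hα_mul τ τcomp τrefl)
        = locQ ↥A ⋙ (Functor.const (LocCat ↥A)).obj (BG.pt G) := by
      refine CategoryTheory.Functor.ext (fun b => rfl) (fun b b' g => ?_)
      simp only [Functor.comp_map, Functor.comp_obj, Functor.const_obj_map, eqToHom_refl,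
        Category.id_comp, Category.comp_id]
      rw [Mfun_map x₀ α hα_one hα_mul τ τcomp τrefl _
        (locMap_obj (inclFunctor A) b) (locMap_obj (inclFunctor A) b')]
      have h1 := Functor.congr_hom (locMap_fac (inclFunctor A)) g
      simp only [Functor.comp_map] at h1
      rw [h1]
      simp only [Functor.comp_obj, Category.assoc, eqToHom_trans, eqToHom_refl,
        Category.id_comp, Category.comp_id, eqToHom_trans_assoc]
      exact (hL b.1 b'.1 b.2 b'.2 ((inclFunctor A).map g)).trans
        (by show (1 : G) = 1 * (1 * 1); simp)
    have hH : locMap (inclFunctor A) ⋙ Mfun x₀ α hα_one hα_mul τ τcomp τrefl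
        = (Functor.const (LocCat ↥A)).obj (BG.pt G) :=
      CategoryTheory.Localization.Construction.uniq _ _ hfun
    have h4 : (Mfun x₀ α hα_one hα_mul τ τcomp τrefl).map
        ((locMap (inclFunctor A)).map γ) = 𝟙 (BG.pt G) := by
      have h2 := Functor.congr_hom hH γ
      simp only [Functor.comp_map, Functor.const_obj_map] at h2
      rw [h2]
      show (1 : G) * (1 * 1) = 1; simp
    exact ((Mfun_map x₀ α hα_one hα_mul τ τcomp τrefl ((locMap (inclFunctor A)).map γ)
      (locMap_obj (inclFunctor A) a) (locMap_obj (inclFunctor A) a)).symm.trans h4)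
  · -- backward direction
    intro hR a a' ha ha' f
    have hle : (⟨a, ha⟩ : ↥A) ≤ ⟨a', ha'⟩ := leOfHom f
    let fA : (⟨a, ha⟩ : ↥A) ⟶ ⟨a', ha'⟩ := homOfLE hle
    let Sobjs : Set X := {x : X | ∃ hx : x ∈ A, CategoryTheory.Zigzag (⟨x, hx⟩ : ↥A) ⟨a, ha⟩}
    let S : Subcat X :=
      { objs := Sobjs
        homs := fun x y => {g | g ∈ T.homs x y ∧ x ∈ Sobjs ∧ y ∈ Sobjs}
        src_mem := fun h => h.2.1
        tgt_mem := fun h => h.2.2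
        id_mem := fun x hx => ⟨T.id_mem x (haT x), hx, hx⟩
        comp_mem := fun hf hg => ⟨T.comp_mem hf.1 hg.1, hf.2.1, hg.2.2⟩ }
    have hS : IsTree S.carrier := hmeet ⟨a, ha⟩ S rfl (fun x y g => Iff.rfl)
    have hma : a ∈ S.objs := ⟨ha, CategoryTheory.Zigzag.refl _⟩
    have hma' : a' ∈ S.objs := ⟨ha', CategoryTheory.Zigzag.of_inv fA⟩
    obtain ⟨t₀, -⟩ := hS ((locQ S.carrier).obj ⟨a', hma'⟩) ((locQ S.carrier).obj ⟨a, hma⟩)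
    let J : S.carrier ⥤ ↥A := Jfun A S (fun x hx => hx.elim fun h _ => h)
    let K : S.carrier ⥤ T.carrier := Kfun T S (fun x _ => haT x) (fun g hg => hg.1)
    have hJK : J ⋙ inclFunctor A = K ⋙ T.incl := by
      refine CategoryTheory.Functor.ext (fun x => rfl) (fun x y g => ?_)
      rfl
    have hγ := hR ⟨a, ha⟩ ((locQ ↥A).map fA ≫
      (eqToHom (locMap_obj J ⟨a', hma'⟩).symm ≫ (locMap J).map t₀ ≫
        eqToHom (locMap_obj J ⟨a, hma⟩)))
    have key : eqToHom (locMap_obj (inclFunctor A) ⟨a, ha⟩).symm ≫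
        (locMap (inclFunctor A)).map ((locQ ↥A).map fA ≫
          (eqToHom (locMap_obj J ⟨a', hma'⟩).symm ≫ (locMap J).map t₀ ≫
            eqToHom (locMap_obj J ⟨a, hma⟩))) ≫
        eqToHom (locMap_obj (inclFunctor A) ⟨a, ha⟩)
        = (locQ X).map f ≫ τ a' a := by
      have h1 := Functor.congr_hom (locMap_fac (inclFunctor A)) fA
      simp only [Functor.comp_map] at h1
      have c1 : locMap J ⋙ locMap (inclFunctor A) = locMap K ⋙ locMap T.incl := by
        rw [locMap_comp, locMap_comp, hJK]
      have h2 := Functor.congr_hom c1 t₀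
      simp only [Functor.comp_map] at h2
      have h3 := hτ a' a (haT a') (haT a)
        (eqToHom (locMap_obj K ⟨a', hma'⟩).symm ≫ (locMap K).map t₀ ≫
          eqToHom (locMap_obj K ⟨a, hma⟩))
      erw [Functor.map_comp, Functor.map_comp, eqToHom_map, eqToHom_map] at h3
      have hf' : (inclFunctor A).map fA = f := rfl
      rw [Functor.map_comp, Functor.map_comp, Functor.map_comp, eqToHom_map]
      erw [eqToHom_map (locMap (inclFunctor A)) (locMap_obj J ⟨a', hma'⟩).symm]
      rw [h1, hf', h2, h3]
      simp only [Category.assoc, eqToHom_trans, eqToHom_refl, Category.id_comp,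
        Category.comp_id, eqToHom_trans_assoc]
      exact eqToHom_aux_key _ _ _ _ _ _ _ _ _
    erw [key] at hγ
    rw [show τ x₀ a ≫ (locQ X).map f ≫ τ a' x₀
        = τ x₀ a ≫ ((locQ X).map f ≫ τ a' a) ≫ τ a x₀ from by
      rw [← τcomp a' a x₀]; simp only [Category.assoc]]
    exact hγ
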